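/- Geometric estimate I: Fix 0 < τ ≤ 1 and a finite family of parallelograms {u_i}_{i∈I} ⊂ S (parallelograms with two vertical sides). For each i, let s_i ∈ S be a parallelogram with s_i ⊆ u_i, having the same horizontal extent (length) as u_i, and with |s_i| ≥ τ|u_i|. Then |⋃_i s_i| ≥ (τ/3)·|⋃_i u_i|. -/

import Mathlib

open MeasureTheory

/-- A parallelogram with two vertical sides: horizontal extent `[q,p]`, lower edge the line
`y = c + m x`, and (vertical) width `w`. Its vertices are `(q, c+mq)`, `(q, c+mq+w)`,
`(p, c+mp)`, `(p, c+mp+w)`. -/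
def vpar (q p c m w : ℝ) : Set (ℝ × ℝ) :=
  {z | z.1 ∈ Set.Icc q p ∧ z.2 ∈ Set.Icc (c + m * z.1) (c + m * z.1 + w)}


open Set


lemma one_dim (τ : ℝ) (hτ0 : 0 < τ) {ι : Type} (A : Finset ι) (a b a' b' : ι → ℝ)
    (hab : ∀ i ∈ A, 0 ≤ b i - a i) (hab' : ∀ i ∈ A, a' i ≤ b' i)
    (hsub : ∀ i ∈ A, a i ≤ a' i ∧ b' i ≤ b i)
    (hlen : ∀ i ∈ A, τ * (b i - a i) ≤ b' i - a' i) :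
    ENNReal.ofReal (τ / 3) * volume (⋃ i ∈ A, Icc (a i) (b i)) ≤
      volume (⋃ i ∈ A, Icc (a' i) (b' i)) := by
  classical
  induction A using Finset.strongInduction with
  | _ A IH =>
    rcases A.eq_empty_or_nonempty with rfl | hne
    · simp
    have hab := hab; have hab' := hab'; have hsub := hsub; have hlen := hlen
    obtain ⟨i0, hi0, hmax⟩ := A.exists_max_image (fun i => b i - a i) hne
    set L := b i0 - a i0 with hL
    have hL0 : 0 ≤ L := hab i0 hi0
    set B := A.filter (fun i => (Icc (a i) (b i) ∩ Icc (a i0) (b i0)).Nonempty) with hB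
    have hi0B : i0 ∈ B := by
      refine Finset.mem_filter.2 ⟨hi0, ⟨a i0, ?_⟩⟩
      constructor <;> exact ⟨le_refl _, by linarith⟩
    have hBA : B ⊆ A := Finset.filter_subset _ _
    have hss : A \ B ⊂ A := by
      refine Finset.ssubset_iff_of_subset (Finset.sdiff_subset) |>.2 ⟨i0, hi0, by simp [hi0B]⟩
    -- covering: union over A of Icc a b ⊆ big interval ∪ union over A\B
    have hcover : (⋃ i ∈ A, Icc (a i) (b i)) ⊆
        Icc (a i0 - L) (b i0 + L) ∪ ⋃ i ∈ A \ B, Icc (a i) (b i) := by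
      intro x hx
      simp only [mem_iUnion, exists_prop] at hx
      obtain ⟨i, hiA, hxi⟩ := hx
      by_cases hiB : i ∈ B
      · left
        obtain ⟨y, hy1, hy2⟩ := (Finset.mem_filter.1 hiB).2
        have hlen_i : b i - a i ≤ L := hmax i hiA
        constructor
        · have : a i0 - L ≤ y - (b i - a i) := by
            rcases hy2 with ⟨h1, h2⟩; linarith
          have : y - (b i - a i) ≤ a i := by rcases hy1 with ⟨h1, h2⟩; linarith
          have := hxi.1;
          rcases hy2 with ⟨hA2, hB2⟩; rcases hy1 with ⟨hA1, hB1⟩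
          linarith
        · rcases hy2 with ⟨hA2, hB2⟩; rcases hy1 with ⟨hA1, hB1⟩
          have := hxi.2; linarith
      · right
        simp only [mem_iUnion, exists_prop]
        exact ⟨i, Finset.mem_sdiff.2 ⟨hiA, hiB⟩, hxi⟩
    have hvolA : volume (⋃ i ∈ A, Icc (a i) (b i)) ≤
        ENNReal.ofReal (3 * L) + volume (⋃ i ∈ A \ B, Icc (a i) (b i)) := by
      calc volume (⋃ i ∈ A, Icc (a i) (b i))
          ≤ volume (Icc (a i0 - L) (b i0 + L) ∪ ⋃ i ∈ A \ B, Icc (a i) (b i)) :=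
            measure_mono hcover
        _ ≤ volume (Icc (a i0 - L) (b i0 + L)) + volume (⋃ i ∈ A \ B, Icc (a i) (b i)) :=
            measure_union_le _ _
        _ = ENNReal.ofReal (3 * L) + volume (⋃ i ∈ A \ B, Icc (a i) (b i)) := by
            rw [Real.volume_Icc]; congr 2; linarith
    -- disjointness on the small side
    have hdisj : Disjoint (Icc (a' i0) (b' i0)) (⋃ i ∈ A \ B, Icc (a' i) (b' i)) := by
      rw [Set.disjoint_iUnion₂_right]
      intro i hi
      have hiA := (Finset.mem_sdiff.1 hi).1
      have hiB := (Finset.mem_sdiff.1 hi).2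
      have hempty : ¬ (Icc (a i) (b i) ∩ Icc (a i0) (b i0)).Nonempty := by
        intro h; exact hiB (Finset.mem_filter.2 ⟨hiA, h⟩)
      rw [Set.not_nonempty_iff_eq_empty] at hempty
      have h1 : Icc (a' i0) (b' i0) ⊆ Icc (a i0) (b i0) :=
        Icc_subset_Icc (hsub i0 hi0).1 (hsub i0 hi0).2
      have h2 : Icc (a' i) (b' i) ⊆ Icc (a i) (b i) :=
        Icc_subset_Icc (hsub i hiA).1 (hsub i hiA).2
      refine Set.disjoint_left.2 fun x hx1 hx2 => ?_
      have : x ∈ Icc (a i) (b i) ∩ Icc (a i0) (b i0) := ⟨h2 hx2, h1 hx1⟩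
      rw [hempty] at this; exact this
    have hvolJ : ENNReal.ofReal (b' i0 - a' i0) + volume (⋃ i ∈ A \ B, Icc (a' i) (b' i)) ≤
        volume (⋃ i ∈ A, Icc (a' i) (b' i)) := by
      have hsubJ : Icc (a' i0) (b' i0) ∪ (⋃ i ∈ A \ B, Icc (a' i) (b' i)) ⊆
          ⋃ i ∈ A, Icc (a' i) (b' i) := by
        refine Set.union_subset ?_ ?_
        · exact Set.subset_iUnion₂ (s := fun i _ => Icc (a' i) (b' i)) i0 hi0
        · exact Set.iUnion₂_mono' fun i hi => ⟨i, (Finset.mem_sdiff.1 hi).1, le_refl _⟩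
      calc ENNReal.ofReal (b' i0 - a' i0) + volume (⋃ i ∈ A \ B, Icc (a' i) (b' i))
          = volume (Icc (a' i0) (b' i0)) + volume (⋃ i ∈ A \ B, Icc (a' i) (b' i)) := by
            rw [Real.volume_Icc]
        _ = volume (Icc (a' i0) (b' i0) ∪ ⋃ i ∈ A \ B, Icc (a' i) (b' i)) :=
            (measure_union hdisj (by
              exact MeasurableSet.biUnion (Finset.countable_toSet _) fun i _ => measurableSet_Icc)).symm
        _ ≤ _ := measure_mono hsubJ
    have hIH := IH (A \ B) hss (fun i hi => hab i (Finset.mem_sdiff.1 hi).1)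
      (fun i hi => hab' i (Finset.mem_sdiff.1 hi).1)
      (fun i hi => hsub i (Finset.mem_sdiff.1 hi).1)
      (fun i hi => hlen i (Finset.mem_sdiff.1 hi).1)
    calc ENNReal.ofReal (τ / 3) * volume (⋃ i ∈ A, Icc (a i) (b i))
        ≤ ENNReal.ofReal (τ / 3) * (ENNReal.ofReal (3 * L) + volume (⋃ i ∈ A \ B, Icc (a i) (b i))) :=
          mul_le_mul_right hvolA _
      _ = ENNReal.ofReal (τ / 3) * ENNReal.ofReal (3 * L) +
          ENNReal.ofReal (τ / 3) * volume (⋃ i ∈ A \ B, Icc (a i) (b i)) := by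
          rw [mul_add]
      _ ≤ ENNReal.ofReal (b' i0 - a' i0) + volume (⋃ i ∈ A \ B, Icc (a' i) (b' i)) := by
          refine add_le_add ?_ hIH
          rw [← ENNReal.ofReal_mul (by positivity)]
          apply ENNReal.ofReal_le_ofReal
          have := hlen i0 hi0
          calc τ / 3 * (3 * L) = τ * L := by ring
            _ ≤ b' i0 - a' i0 := this
      _ ≤ volume (⋃ i ∈ A, Icc (a' i) (b' i)) := hvolJ


lemma vpar_meas (q p c m w : ℝ) : MeasurableSet (vpar q p c m w) := by
  have h1 : MeasurableSet {z : ℝ × ℝ | z.1 ∈ Set.Icc q p} :=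
    measurable_fst measurableSet_Icc
  have h2 : MeasurableSet {z : ℝ × ℝ | c + m * z.1 ≤ z.2} :=
    measurableSet_le (by fun_prop) measurable_snd
  have h3 : MeasurableSet {z : ℝ × ℝ | z.2 ≤ c + m * z.1 + w} :=
    measurableSet_le measurable_snd (by fun_prop)
  have : vpar q p c m w = {z : ℝ × ℝ | z.1 ∈ Set.Icc q p} ∩
      ({z : ℝ × ℝ | c + m * z.1 ≤ z.2} ∩ {z : ℝ × ℝ | z.2 ≤ c + m * z.1 + w}) := by
    ext z; simp [vpar, Set.mem_Icc, and_assoc]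
  rw [this]; exact h1.inter (h2.inter h3)

lemma vpar_slice (q p c m w x : ℝ) :
    Prod.mk x ⁻¹' vpar q p c m w =
      if x ∈ Set.Icc q p then Set.Icc (c + m * x) (c + m * x + w) else ∅ := by
  ext y; by_cases hx : x ∈ Set.Icc q p
  · simp only [hx, if_true]
    simp [vpar, hx.1, hx.2]
  · simp only [hx, if_false]
    simp only [Set.mem_preimage, Set.mem_empty_iff_false, iff_false]
    intro h; exact hx h.1

lemma vpar_volume (q p c m w : ℝ) (hqp : q ≤ p) (hw : 0 ≤ w) :
    volume (vpar q p c m w) = ENNReal.ofReal w * ENNReal.ofReal (p - q) := by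
  rw [Measure.volume_eq_prod, Measure.prod_apply (vpar_meas q p c m w)]
  have : ∀ x : ℝ, volume (Prod.mk x ⁻¹' vpar q p c m w) =
      Set.indicator (Set.Icc q p) (fun _ => ENNReal.ofReal w) x := by
    intro x
    rw [vpar_slice]
    by_cases hx : x ∈ Set.Icc q p <;>
      simp [hx, Real.volume_Icc]
  simp_rw [this]
  rw [lintegral_indicator measurableSet_Icc _, setLIntegral_const, Real.volume_Icc]

/-- Geometric estimate I: if each `s_i ⊆ u_i` is a parallelogram with the same horizontal
extent as `u_i` and `|s_i| ≥ τ|u_i|`, then `|⋃ s_i| ≥ (τ/3)|⋃ u_i|`. -/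
theorem stmt_8 (τ : ℝ) (hτ0 : 0 < τ) (hτ1 : τ ≤ 1)
    {ι : Type} (A : Finset ι) (q p c m w c' m' w' : ι → ℝ)
    (hqp : ∀ i ∈ A, q i < p i) (hw : ∀ i ∈ A, 0 < w i) (hw' : ∀ i ∈ A, 0 < w' i)
    (hsub : ∀ i ∈ A, vpar (q i) (p i) (c' i) (m' i) (w' i) ⊆ vpar (q i) (p i) (c i) (m i) (w i))
    (harea : ∀ i ∈ A,
      ENNReal.ofReal τ * volume (vpar (q i) (p i) (c i) (m i) (w i)) ≤
        volume (vpar (q i) (p i) (c' i) (m' i) (w' i))) :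
    ENNReal.ofReal (τ / 3) * volume (⋃ i ∈ A, vpar (q i) (p i) (c i) (m i) (w i)) ≤
      volume (⋃ i ∈ A, vpar (q i) (p i) (c' i) (m' i) (w' i)) := by
  classical
  -- width inequality
  have hww : ∀ i ∈ A, τ * w i ≤ w' i := by
    intro i hi
    have h := harea i hi
    rw [vpar_volume _ _ _ _ _ (hqp i hi).le (hw i hi).le,
        vpar_volume _ _ _ _ _ (hqp i hi).le (hw' i hi).le, ← mul_assoc] at h
    have hpq0 : ENNReal.ofReal (p i - q i) ≠ 0 := by
      simp [ENNReal.ofReal_eq_zero]; linarith [hqp i hi]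
    have h2 : ENNReal.ofReal τ * ENNReal.ofReal (w i) ≤ ENNReal.ofReal (w' i) :=
      (ENNReal.mul_le_mul_iff_left hpq0 ENNReal.ofReal_ne_top).1 h
    rw [← ENNReal.ofReal_mul hτ0.le] at h2
    exact (ENNReal.ofReal_le_ofReal_iff (hw' i hi).le).1 h2
  -- slice endpoint inequalities
  have hslice : ∀ i ∈ A, ∀ x ∈ Set.Icc (q i) (p i),
      c i + m i * x ≤ c' i + m' i * x ∧
        c' i + m' i * x + w' i ≤ c i + m i * x + w i := by
    intro i hi x hx
    have h1 : (x, c' i + m' i * x) ∈ vpar (q i) (p i) (c' i) (m' i) (w' i) := by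
      simp only [vpar, Set.mem_setOf_eq, Set.mem_Icc]
      exact ⟨⟨hx.1, hx.2⟩, le_refl _, by linarith [hw' i hi]⟩
    have h2 : (x, c' i + m' i * x + w' i) ∈ vpar (q i) (p i) (c' i) (m' i) (w' i) := by
      simp only [vpar, Set.mem_setOf_eq, Set.mem_Icc]
      exact ⟨⟨hx.1, hx.2⟩, by linarith [hw' i hi], le_refl _⟩
    have g1 := hsub i hi h1
    have g2 := hsub i hi h2
    simp only [vpar, Set.mem_setOf_eq, Set.mem_Icc] at g1 g2
    exact ⟨g1.2.1, g2.2.2⟩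
  have hmeasU : MeasurableSet (⋃ i ∈ A, vpar (q i) (p i) (c i) (m i) (w i)) :=
    MeasurableSet.biUnion (A.countable_toSet) fun i _ => vpar_meas _ _ _ _ _
  have hmeasS : MeasurableSet (⋃ i ∈ A, vpar (q i) (p i) (c' i) (m' i) (w' i)) :=
    MeasurableSet.biUnion (A.countable_toSet) fun i _ => vpar_meas _ _ _ _ _
  rw [Measure.volume_eq_prod, Measure.prod_apply hmeasU, Measure.prod_apply hmeasS,
      ← lintegral_const_mul' _ _ ENNReal.ofReal_ne_top]
  apply lintegral_mono
  intro x
  -- identify the slices with unions of intervals over the filtered finset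
  have hsliceU : Prod.mk x ⁻¹' (⋃ i ∈ A, vpar (q i) (p i) (c i) (m i) (w i)) =
      ⋃ i ∈ A.filter (fun i => x ∈ Set.Icc (q i) (p i)),
        Icc (c i + m i * x) (c i + m i * x + w i) := by
    ext y
    simp only [Set.preimage_iUnion, Set.mem_iUnion, Set.mem_preimage, Finset.mem_filter,
      exists_prop, vpar_slice]
    constructor
    · rintro ⟨i, hi, hy⟩
      by_cases hx : x ∈ Set.Icc (q i) (p i)
      · exact ⟨i, ⟨hi, hx⟩, by simpa [hx] using hy⟩
      · simp [hx] at hy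
    · rintro ⟨i, ⟨hi, hx⟩, hy⟩
      exact ⟨i, hi, by simpa [hx] using hy⟩
  have hsliceS : Prod.mk x ⁻¹' (⋃ i ∈ A, vpar (q i) (p i) (c' i) (m' i) (w' i)) =
      ⋃ i ∈ A.filter (fun i => x ∈ Set.Icc (q i) (p i)),
        Icc (c' i + m' i * x) (c' i + m' i * x + w' i) := by
    ext y
    simp only [Set.preimage_iUnion, Set.mem_iUnion, Set.mem_preimage, Finset.mem_filter,
      exists_prop, vpar_slice]
    constructor
    · rintro ⟨i, hi, hy⟩
      by_cases hx : x ∈ Set.Icc (q i) (p i)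
      · exact ⟨i, ⟨hi, hx⟩, by simpa [hx] using hy⟩
      · simp [hx] at hy
    · rintro ⟨i, ⟨hi, hx⟩, hy⟩
      exact ⟨i, hi, by simpa [hx] using hy⟩
  dsimp only
  rw [hsliceU, hsliceS]
  apply one_dim τ hτ0
  · intro i hi; have := hw i (Finset.mem_filter.1 hi).1; linarith
  · intro i hi; have := hw' i (Finset.mem_filter.1 hi).1; linarith
  · intro i hi
    obtain ⟨hiA, hx⟩ := Finset.mem_filter.1 hi
    exact ⟨(hslice i hiA x hx).1, (hslice i hiA x hx).2⟩
  · intro i hi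
    obtain ⟨hiA, hx⟩ := Finset.mem_filter.1 hi
    have := hww i hiA
    have h := (hslice i hiA x hx)
    ring_nf
    linarith
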